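/- Let E be a real normed vector space, A ⊆ E, c, y, x ∈ E, ρ ≥ 0, and ε ≥ 0. Assume that for every z ∈ segment[c,y] one has closedBall(z, ρ+ε) ⊆ A, and that ‖x − c‖ ≤ ε. Then segment[x,y] ⊆ safepoly, where safepoly := {w ∈ E : ∀ v ∈ segment[c,w], closedBall(v,ρ) ⊆ A}; that is, every point on the segment from x to y lies in the safe scan polygon. -/
import Mathlib


/-- If the goal `y` lies in the safer scan polygon (margin `ε`) and the robot `x` is
within distance `ε` of the scan center `c`, then the whole segment from `x` to `y`
lies inside the safe scan polygon. -/
theorem segment_subset_safepoly {E : Type*} [NormedAddCommGroup E] [NormedSpace ℝ E]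
    (A : Set E) (c y x : E) (ρ ε : ℝ) (hρ : 0 ≤ ρ) (hε : 0 ≤ ε)
    (hy : ∀ z ∈ segment ℝ c y, Metric.closedBall z (ρ + ε) ⊆ A)
    (hx : ‖x - c‖ ≤ ε) :
    segment ℝ x y ⊆ {w : E | ∀ v ∈ segment ℝ c w, Metric.closedBall v ρ ⊆ A} := by
  rintro w ⟨a, b, ha, hb, hab, rfl⟩ v ⟨s, t, hs, ht, hst, rfl⟩
  set z := (s + t * a) • c + (t * b) • y with hz
  have hzseg : z ∈ segment ℝ c y :=
    ⟨s + t * a, t * b, by positivity, by positivity, by nlinarith, rfl⟩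
  have ht1 : t ≤ 1 := by linarith
  have ha1 : a ≤ 1 := by linarith
  have hdist : ‖(s • c + t • (a • x + b • y)) - z‖ ≤ ε := by
    have : (s • c + t • (a • x + b • y)) - z = (t * a) • (x - c) := by
      rw [hz]; module
    rw [this, norm_smul]
    have hta : 0 ≤ t * a := by positivity
    have hta1 : t * a ≤ 1 := by nlinarith
    calc |t * a| * ‖x - c‖ = (t * a) * ‖x - c‖ := by rw [abs_of_nonneg hta]
      _ ≤ 1 * ε := by
          apply mul_le_mul hta1 hx (norm_nonneg _) (by norm_num)
      _ = ε := one_mul ε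
  intro p hp
  apply hy z hzseg
  rw [Metric.mem_closedBall] at hp ⊢
  calc dist p z ≤ dist p (s • c + t • (a • x + b • y)) + dist (s • c + t • (a • x + b • y)) z :=
        dist_triangle _ _ _
    _ ≤ ρ + ε := add_le_add hp (by rwa [dist_eq_norm])
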